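/- The control-arm pseudo-outcome is conservatively biased up to a product term: E[φ₀⁻] ≤ Y⁻₀ + (|ê - e★|/(1 - ê))·|ρ̂ - ρ̄₋(q̂)|. That is, any bias of the pseudo-outcome in the undesirable direction (above the sharp conditional lower bound Y⁻₀) is controlled by the product of the propensity error and the error of ρ̂ relative to ρ̄₋(q̂) = ρ₋*(x, 0, q̂), even if the estimated quantile q̂ is arbitrary. This is the second display (the favorable signed bias bound) of Theorem 4.2 for the control arm, at the point x. -/

import Mathlib

open MeasureTheory

/-- Favorable signed bias bound for the control arm: the pseudo-outcome is
conservatively biased up to a product term,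
`E[φ₀⁻] ≤ Y⁻₀ + (|ê - e★|/(1 - ê))·|ρ̂ - ρ̄₋(q̂)|`. -/
theorem control_pseudo_outcome_valid_bias_bound
    {Ω : Type*} [MeasurableSpace Ω] (P : Measure Ω) [IsProbabilityMeasure P]
    (Y : Ω → ℝ) (hY : Integrable Y P)
    (T : Set Ω) (hT : MeasurableSet T)
    (estar : ℝ) (hestar : estar = (P T).toReal) (he : estar ∈ Set.Ioo (0 : ℝ) 1)
    (Λ : ℝ) (hΛ : 1 ≤ Λ)
    (Rm : ℝ → ℝ → ℝ)
    (hRm : ∀ y q : ℝ, Rm y q = Λ⁻¹ * y + (1 - Λ⁻¹) * (q + (Λ + 1) * min (y - q) 0))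
    (ehat : ℝ) (hehat : ehat ∈ Set.Ioo (0 : ℝ) 1) (ρhat qhat : ℝ)
    (μstar0 : ℝ) (hμstar0 : μstar0 = (∫ ω in Tᶜ, Y ω ∂P) / (1 - estar))
    (ρbarm : ℝ → ℝ)
    (hρbarm : ∀ q : ℝ, ρbarm q = (∫ ω in Tᶜ, Rm (Y ω) q ∂P) / (1 - estar))
    (φ : Ω → ℝ)
    (hφ : ∀ ω, φ ω =
      Tᶜ.indicator (fun _ => (1 : ℝ)) ω * Y ω +
        T.indicator (fun _ => (1 : ℝ)) ω * ρhat +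
        (ehat / (1 - ehat)) * Tᶜ.indicator (fun _ => (1 : ℝ)) ω *
          (Rm (Y ω) qhat - ρhat))
    (ρstarm : ℝ) (hρstarm : ρstarm = sSup (Set.range ρbarm))
    (Yminus0 : ℝ) (hYminus0 : Yminus0 = (1 - estar) * μstar0 + estar * ρstarm) :
    ∫ ω, φ ω ∂P ≤ Yminus0 + (|ehat - estar| / (1 - ehat)) * |ρhat - ρbarm qhat| := by
  have hΛ0 : (0:ℝ) < Λ := lt_of_lt_of_le one_pos hΛ
  have hΛi1 : Λ⁻¹ ≤ 1 := by
    rw [inv_le_one_iff₀]; right; exact hΛ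
  have hΛi0 : 0 < Λ⁻¹ := inv_pos.mpr hΛ0
  have hΛmul : Λ * Λ⁻¹ = 1 := mul_inv_cancel₀ hΛ0.ne'
  have h1e : (0:ℝ) < 1 - estar := by linarith [he.2]
  have h1eh : (0:ℝ) < 1 - ehat := by linarith [hehat.2]
  set c := ehat / (1 - ehat) with hc
  -- integrability of the Rm-transformed outcome
  have hgint : ∀ q : ℝ, Integrable (fun ω => Rm (Y ω) q) P := by
    intro q
    have heq : (fun ω => Rm (Y ω) q) = fun ω =>
        Λ⁻¹ * Y ω + (1 - Λ⁻¹) * (q + ((Λ + 1) * ((Y ω - q) - |Y ω - q|)) / 2) := by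
      funext ω
      rw [hRm]
      have hm : min (Y ω - q) 0 = ((Y ω - q) - |Y ω - q|) / 2 := by
        rcases le_or_gt (Y ω - q) 0 with h | h
        · rw [min_eq_left h, abs_of_nonpos h]; ring
        · rw [min_eq_right h.le, abs_of_pos h]; ring
      rw [hm]; ring
    rw [heq]
    have h1 : Integrable (fun ω => Y ω - q) P := hY.sub (integrable_const _)
    exact (hY.const_mul _).add (((integrable_const q).add
      (((h1.sub h1.abs).const_mul _).div_const 2)).const_mul _)
  -- pointwise bound Rm y q ≤ y
  have hRle : ∀ (y q : ℝ), Rm y q ≤ y := by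
    intro y q
    rw [hRm]
    rcases le_or_gt (y - q) 0 with h | h
    · rw [min_eq_left h]; nlinarith
    · rw [min_eq_right h.le]; nlinarith
  -- measure of Tᶜ
  have hPTc : (P Tᶜ).toReal = 1 - estar := by
    rw [prob_compl_eq_one_sub hT, hestar,
      ENNReal.toReal_sub_of_le prob_le_one ENNReal.one_ne_top, ENNReal.toReal_one]
  -- rewrite φ as a sum of indicators
  have hφ' : φ = fun ω => Tᶜ.indicator (fun ω => Y ω + c * (Rm (Y ω) qhat - ρhat)) ω
      + T.indicator (fun _ => ρhat) ω := by
    funext ω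
    rw [hφ ω]
    by_cases hω : ω ∈ T <;>
      simp [Set.indicator_apply, hω]
  have hint0 : Integrable (fun ω => Rm (Y ω) qhat - ρhat) P := by
    exact (hgint qhat).sub (integrable_const _)
  have hint2 : Integrable (fun ω => c * (Rm (Y ω) qhat - ρhat)) P := by
    exact hint0.const_mul c
  have hint1 : Integrable (fun ω => Y ω + c * (Rm (Y ω) qhat - ρhat)) P := hY.add hint2
  -- value of the integral
  have hI : ∫ ω, φ ω ∂P =
      (∫ ω in Tᶜ, Y ω ∂P) + c * ((∫ ω in Tᶜ, Rm (Y ω) qhat ∂P) - (1 - estar) * ρhat)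
        + estar * ρhat := by
    rw [hφ', integral_add (hint1.indicator hT.compl)
        ((integrable_const ρhat).indicator hT),
      integral_indicator hT.compl, integral_indicator hT, setIntegral_const,
      integral_add hY.integrableOn hint2.integrableOn,
      integral_const_mul,
      integral_sub (hgint qhat).integrableOn (integrable_const _).integrableOn,
      setIntegral_const, measureReal_def, measureReal_def, hPTc, hestar]
    simp [smul_eq_mul]
  have hA : (∫ ω in Tᶜ, Y ω ∂P) = (1 - estar) * μstar0 := by
    rw [hμstar0]; field_simp
  have hB : (∫ ω in Tᶜ, Rm (Y ω) qhat ∂P) = (1 - estar) * ρbarm qhat := by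
    rw [hρbarm]; field_simp
  -- sup bound
  have hub : ∀ q, ρbarm q ≤ μstar0 := by
    intro q
    rw [hρbarm, hμstar0]
    apply div_le_div_of_nonneg_right ?_ h1e.le
    · exact setIntegral_mono_on (hgint q).integrableOn hY.integrableOn hT.compl
        fun ω _ => hRle (Y ω) q
  have hbdd : BddAbove (Set.range ρbarm) := ⟨μstar0, by rintro _ ⟨q, rfl⟩; exact hub q⟩
  have hsup : ρbarm qhat ≤ ρstarm := by
    rw [hρstarm]; exact le_csSup hbdd ⟨qhat, rfl⟩
  -- key algebraic identity
  set ρb := ρbarm qhat with hρb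
  have hkey : estar * ρhat + c * ((1 - estar) * ρb - (1 - estar) * ρhat)
      = estar * ρb + (ρhat - ρb) * (estar - ehat) / (1 - ehat) := by
    rw [hc]; field_simp; ring
  have habs : (ρhat - ρb) * (estar - ehat) / (1 - ehat)
      ≤ |ehat - estar| / (1 - ehat) * |ρhat - ρb| := by
    rw [div_mul_eq_mul_div, mul_comm]
    apply div_le_div_of_nonneg_right ?_ h1eh.le
    calc (estar - ehat) * (ρhat - ρb) ≤ |(estar - ehat) * (ρhat - ρb)| := le_abs_self _
      _ = |ehat - estar| * |ρhat - ρb| := by rw [abs_mul, abs_sub_comm estar ehat]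
  rw [hI, hA, hB, hYminus0]
  have hfin : estar * ρb ≤ estar * ρstarm :=
    mul_le_mul_of_nonneg_left hsup he.1.le
  linarith [hkey, habs, hfin]
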